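/- The Value of Unilateral Altruism of user 1 in the two-user routing game on the load-balancing network is arbitrarily large: for every r > 0, L > 0 and every M > 0, there exist δ, c with 0 < δ < L < c and cδ < rL, and β ∈ (1/2, 1], such that (r, r − δ) is a Nash equilibrium of the altruistic game (user 1 minimizing Ĵ₁ = (1 − β)J₁ + βJ₂, user 2 minimizing J₂), (r/2 + ζ, r/2 + ζ) with ζ = cδ/(2L) is a Nash equilibrium of the selfish game, and J₁(r/2 + ζ, r/2 + ζ) > M · J₁(r, r − δ). -/

import Mathlib

set_option maxHeartbeats 4000000


/-- Elbow latency function with parameters `r, L, δ`. -/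
noncomputable def T (r L δ x : ℝ) : ℝ := max 0 (L / δ * (x - r) + L)

/-- Cost of user 1 in the two-user load-balancing game. -/
noncomputable def J₁ (r L δ c x₁ x₂ : ℝ) : ℝ :=
  x₁ * T r L δ (x₁ + (r - x₂)) + (r - x₁) * (c + T r L δ (x₂ + (r - x₁)))

/-- Cost of user 2 in the two-user load-balancing game. -/
noncomputable def J₂ (r L δ c x₁ x₂ : ℝ) : ℝ :=
  x₂ * T r L δ (x₂ + (r - x₁)) + (r - x₂) * (c + T r L δ (x₁ + (r - x₂)))

/-- Perceived cost of the unilaterally altruistic user 1 with degree of cooperation `β`. -/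
noncomputable def Jhat₁ (r L δ c β x₁ x₂ : ℝ) : ℝ :=
  (1 - β) * J₁ r L δ c x₁ x₂ + β * J₂ r L δ c x₁ x₂
theorem value_of_unilateral_altruism_unbounded
    (r L : ℝ) (hr : 0 < r) (hL : 0 < L) (M : ℝ) (hM : 0 < M) :
    ∃ δ c β : ℝ, 0 < δ ∧ δ < L ∧ L < c ∧ c * δ < r * L ∧ β ∈ Set.Ioc (1 / 2 : ℝ) 1 ∧
      -- (r, r - δ) is a Nash equilibrium of the altruistic game
      (∀ x₁ ∈ Set.Icc (0 : ℝ) r,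
        Jhat₁ r L δ c β r (r - δ) ≤ Jhat₁ r L δ c β x₁ (r - δ)) ∧
      (∀ x₂ ∈ Set.Icc (0 : ℝ) r, J₂ r L δ c r (r - δ) ≤ J₂ r L δ c r x₂) ∧
      -- (r/2 + ζ, r/2 + ζ) is a Nash equilibrium of the selfish game
      (∀ x₁ ∈ Set.Icc (0 : ℝ) r,
        J₁ r L δ c (r / 2 + c * δ / (2 * L)) (r / 2 + c * δ / (2 * L)) ≤
          J₁ r L δ c x₁ (r / 2 + c * δ / (2 * L))) ∧
      (∀ x₂ ∈ Set.Icc (0 : ℝ) r,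
        J₂ r L δ c (r / 2 + c * δ / (2 * L)) (r / 2 + c * δ / (2 * L)) ≤
          J₂ r L δ c (r / 2 + c * δ / (2 * L)) x₂) ∧
      -- VoU of user 1 exceeds M
      J₁ r L δ c (r / 2 + c * δ / (2 * L)) (r / 2 + c * δ / (2 * L)) >
        M * J₁ r L δ c r (r - δ) := by
  obtain ⟨c, hcdef⟩ : ∃ x : ℝ, x = L * (4*M+4) := ⟨_, rfl⟩
  obtain ⟨δ, hδdef⟩ : ∃ x : ℝ, x = min L (r*L^2/c^2) / 2 := ⟨_, rfl⟩
  have hcL : 4*L ≤ c := by rw [hcdef]; nlinarith [mul_pos hL hM]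
  have hcpos : 0 < c := by linarith
  have hc0 : c ≠ 0 := ne_of_gt hcpos
  have hrL2 : 0 < r*L^2/c^2 := by positivity
  have hδpos : 0 < δ := by
    rw [hδdef]
    have := lt_min hL hrL2
    linarith
  have hδhalf : 2*δ ≤ r*L^2/c^2 := by
    rw [hδdef]
    have := min_le_right L (r*L^2/c^2)
    linarith
  have hδbound : 2*c^2*δ ≤ r*L^2 := by
    have h := mul_le_mul_of_nonneg_left hδhalf (sq_nonneg c)
    have h2 : c^2*(r*L^2/c^2) = r*L^2 := by field_simp
    nlinarith
  have hδL : δ < L := by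
    rw [hδdef]
    have := min_le_left L (r*L^2/c^2)
    linarith
  have hcδ : 8*(c*δ) ≤ r*L := by
    have h1 : 8*(c*δ)*L ≤ r*L*L := by
      nlinarith [mul_nonneg (sub_nonneg.mpr hcL) (mul_pos hcpos hδpos).le]
    nlinarith [h1, hL]
  have hcδlt : c*δ < r*L := by nlinarith [mul_pos hcpos hδpos]
  have hrδ : 32*δ ≤ r := by
    nlinarith [hcδ, mul_nonneg (sub_nonneg.mpr hcL) hδpos.le, hL]
  have hLc : L < c := by linarith
  have hdne : δ ≠ 0 := ne_of_gt hδpos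
  have hq : L/δ*δ = L := div_mul_cancel₀ L hdne
  have hqpos : 0 < L/δ := div_pos hL hδpos
  -- T evaluations
  have hTrδ : T r L δ (r - δ) = 0 := by
    simp only [T]; apply max_eq_left; nlinarith [hq]
  have hTrpδ : T r L δ (r + δ) = 2*L := by
    simp only [T]
    rw [max_eq_right (by nlinarith [hq])]
    nlinarith [hq]
  have hTr : T r L δ r = L := by
    simp only [T]
    rw [max_eq_right (by nlinarith [hq])]
    ring_nf
  have e1 : (r/2 + c*δ/(2*L)) + (r - (r/2 + c*δ/(2*L))) = r := by ring
  have e2 : (r-δ) + (r-r) = r - δ := by ring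
  have e3 : r - (r-δ) = δ := by ring
  have h9 : r*(L/δ*δ) = r*L := by rw [hq]
  have h10 : δ*(L/δ*δ) = δ*L := by rw [hq]
  -- key: selfish NE condition for user 1
  have key3 : ∀ x ∈ Set.Icc (0:ℝ) r,
      J₁ r L δ c (r/2 + c*δ/(2*L)) (r/2 + c*δ/(2*L)) ≤
        J₁ r L δ c x (r/2 + c*δ/(2*L)) := by
    intro x hx
    obtain ⟨hx0, hxr⟩ := hx
    simp only [J₁]
    rw [e1, hTr]
    have hb1 : L/δ*((x + (r - (r/2 + c*δ/(2*L)))) - r) + L ≤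
        T r L δ (x + (r - (r/2 + c*δ/(2*L)))) := by
      simp only [T]; exact le_max_right _ _
    have hb2 : L/δ*(((r/2 + c*δ/(2*L)) + (r - x)) - r) + L ≤
        T r L δ ((r/2 + c*δ/(2*L)) + (r - x)) := by
      simp only [T]; exact le_max_right _ _
    have h5 : (x - r/2 - c*δ/(2*L)) * (2*(L/δ)*(c*δ/(2*L))) =
        (x - r/2 - c*δ/(2*L)) * c := by
      congr 1
      field_simp
    nlinarith [mul_le_mul_of_nonneg_left hb1 hx0,
      mul_le_mul_of_nonneg_left hb2 (by linarith : (0:ℝ) ≤ r - x),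
      h5, mul_nonneg hqpos.le (sq_nonneg (x - r/2 - c*δ/(2*L)))]
  refine ⟨δ, c, 1, hδpos, hδL, hLc, hcδlt, ⟨by norm_num, le_refl 1⟩, ?_, ?_, key3, ?_, ?_⟩
  · -- altruistic NE, user 1 (β = 1, so perceived cost is J₂)
    intro x₁ hx
    obtain ⟨hx0, hxr⟩ := hx
    simp only [Jhat₁]
    norm_num
    simp only [J₂]
    rw [e2, e3, hTrδ, hTrpδ]
    have hT5 : T r L δ ((r - δ) + (r - x₁)) = L/δ*((r-δ)+(r-x₁) - r) + L := by
      simp only [T]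
      apply max_eq_right
      nlinarith [hq, mul_nonneg hqpos.le (sub_nonneg.mpr hxr)]
    rw [hT5]
    rcases le_total (L/δ*(x₁ + δ - r) + L) 0 with hcase | hcase
    · have hT6 : T r L δ (x₁ + δ) = 0 := by
        simp only [T]; exact max_eq_left hcase
      rw [hT6]
      have h6 : 2*L ≤ L/δ*(r - x₁) := by nlinarith [hq]
      have h7 : 0 ≤ (r - 2*δ) * (L/δ*(r - x₁) - 2*L) :=
        mul_nonneg (by linarith) (by linarith)
      have h8 : δ*(2*L) ≤ δ*(L/δ*(r - x₁)) :=
        mul_le_mul_of_nonneg_left h6 hδpos.le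
      nlinarith [h6, h7, h8, h9, h10]
    · have hT6 : T r L δ (x₁ + δ) = L/δ*(x₁ + δ - r) + L := by
        simp only [T]; exact max_eq_right hcase
      rw [hT6]
      have h7 : 0 ≤ (r - 2*δ) * (L/δ*(r - x₁)) :=
        mul_nonneg (by linarith) (mul_nonneg hqpos.le (by linarith))
      nlinarith [h7, h9, h10]
  · -- altruistic NE, user 2
    intro x₂ hx
    obtain ⟨hx0, hxr⟩ := hx
    simp only [J₂]
    rw [e2, e3, hTrδ, hTrpδ]
    have e6 : x₂ + (r - r) = x₂ := by ring
    rw [e6]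
    have hT7 : T r L δ (r + (r - x₂)) = L/δ*(r + (r - x₂) - r) + L := by
      simp only [T]
      apply max_eq_right
      nlinarith [mul_nonneg hqpos.le (sub_nonneg.mpr hxr)]
    rw [hT7]
    have h15 : x₂*(L/δ*δ) = x₂*L := by rw [hq]
    rcases le_total (L/δ*(x₂ - r) + L) 0 with hcase | hcase
    · have hT8 : T r L δ x₂ = 0 := by
        simp only [T]; exact max_eq_left hcase
      rw [hT8]
      have hu : δ ≤ r - x₂ := by
        by_contra hcon
        push_neg at hcon
        nlinarith [hq, mul_pos hqpos (show (0:ℝ) < δ - (r - x₂) by linarith)]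
      have h12 : δ*L ≤ (r - x₂)*(L/δ*(r - x₂)) := by
        have hL2 : L ≤ L/δ*(r - x₂) := by nlinarith [hq]
        calc δ*L ≤ (r - x₂)*L := by nlinarith
          _ ≤ (r - x₂)*(L/δ*(r - x₂)) :=
            mul_le_mul_of_nonneg_left hL2 (by linarith)
      nlinarith [h12, mul_le_mul_of_nonneg_right hu hcpos.le,
        mul_le_mul_of_nonneg_right hu hL.le]
    · have hT8 : T r L δ x₂ = L/δ*(x₂ - r) + L := by
        simp only [T]; exact max_eq_right hcase
      rw [hT8]
      have hu' : r - x₂ ≤ δ := by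
        by_contra hcon
        push_neg at hcon
        nlinarith [hq, mul_pos hqpos (show (0:ℝ) < (r - x₂) - δ by linarith)]
      have hqr : c + 4*L ≤ L/δ*r := by
        rw [div_mul_eq_mul_div, le_div_iff₀ hδpos]
        nlinarith [hcδ, mul_nonneg (sub_nonneg.mpr hcL) hδpos.le]
      have h13 : L/δ*(r - x₂) ≤ L := by nlinarith [hq]
      have h14 : 0 ≤ (δ - (r - x₂)) * (L/δ*r - c - 2*(L/δ*(r - x₂)) - 2*L) :=
        mul_nonneg (by linarith) (by linarith)
      nlinarith [h14, h9, h10, h15]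
  · -- selfish NE, user 2: by symmetry from key3
    intro x₂ hx
    exact key3 x₂ hx
  · -- VoU exceeds M
    simp only [J₁]
    rw [e1, hTr, e3, e2, hTrδ, hTrpδ]
    have hzc : (c*δ/(2*L))*c ≤ r*L/4 := by
      have h1 : 2*L*((c*δ/(2*L))*c) = c^2*δ := by
        field_simp
      nlinarith [hδbound, hL]
    have hc3 : r*c = r*(L*(4*M+4)) := by rw [hcdef]
    nlinarith [hzc, hc3, mul_pos hr hL, hM, hL, hr]
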